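/- The semigroup B = ⟨x, y | x² = 0, y² = 0, xyx = yxy⟩ satisfies a non-trivial identity u ≈ v if and only if one of the following holds: (1) neither u nor v is (4,2)-trivial; (2) u ≈ v has the form abc ≈ cba for distinct letters a, b, c; (3) u ≈ v has the form aba ≈ bab for distinct letters a, b. -/

import Mathlib

/-- Evaluation of the nonempty word `x :: w` under the substitution `φ`. -/
def evalWord {X S : Type*} [Mul S] (φ : X → S) : X → List X → S
  | x, [] => φ x
  | x, y :: l => φ x * evalWord φ y l

/-- A word is (4,2)-trivial iff it has length at most 3 and contains no factor z²
(no two equal consecutive letters). -/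
def Trivial42 {X : Type*} (w : List X) : Prop :=
  w.length ≤ 3 ∧ w.Chain' (· ≠ ·)

/-- The 6-element nilpotent semigroup B = ⟨x, y | x² = 0, y² = 0, xyx = yxy⟩,
with elements x, y, xy, yx, xyx (= yxy) and 0. -/
inductive SgpB : Type | x | y | xy | yx | xyx | zero

def SgpB.mul : SgpB → SgpB → SgpB
  | .x, .y => .xy
  | .x, .yx => .xyx
  | .y, .x => .yx
  | .y, .xy => .xyx
  | .xy, .x => .xyx
  | .yx, .y => .xyx
  | _, _ => .zero

instance : Semigroup SgpB where
  mul := SgpB.mul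
  mul_assoc := by intro a b c; cases a <;> cases b <;> cases c <;> rfl

instance : DecidableEq SgpB := fun a b => by
  cases a <;> cases b <;> first | exact isTrue rfl | exact isFalse (fun h => SgpB.noConfusion h)

namespace SgpBAux

lemma zero_mul' : ∀ s : SgpB, SgpB.zero * s = SgpB.zero := by intro s; cases s <;> rfl
lemma mul_zero' : ∀ s : SgpB, s * SgpB.zero = SgpB.zero := by intro s; cases s <;> rfl
lemma mul_self' : ∀ s : SgpB, s * s = SgpB.zero := by intro s; cases s <;> rfl

/-- Length of an element as a word in the generators, with `zero` given sentinel value 4. -/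
def len : SgpB → ℕ
  | .x => 1 | .y => 1 | .xy => 2 | .yx => 2 | .xyx => 3 | .zero => 4

lemma one_le_len : ∀ s : SgpB, 1 ≤ len s := by intro s; cases s <;> decide
lemma len_mul : ∀ s t : SgpB, min 4 (len s + len t) ≤ len (s * t) := by
  intro s t; cases s <;> cases t <;> decide
lemma eq_zero_of_four_le_len : ∀ s : SgpB, 4 ≤ len s → s = SgpB.zero := by
  intro s; cases s <;> decide

variable {X : Type*}

lemma len_evalWord (φ : X → SgpB) : ∀ (u : List X) (a : X),
    min 4 (u.length + 1) ≤ len (evalWord φ a u) := by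
  intro u
  induction u with
  | nil => intro a; simpa [evalWord] using one_le_len (φ a)
  | cons y l ih =>
    intro a
    have h1 := one_le_len (φ a)
    have h2 := ih y
    have h3 := len_mul (φ a) (evalWord φ y l)
    have he : evalWord φ a (y :: l) = φ a * evalWord φ y l := rfl
    rw [he, List.length_cons]
    omega

lemma evalWord_eq_zero_of_long (φ : X → SgpB) (a : X) (u : List X) (h : 3 ≤ u.length) :
    evalWord φ a u = SgpB.zero := by
  apply eq_zero_of_four_le_len
  have := len_evalWord φ u a
  omega

lemma evalWord_eq_zero_of_not_chain (φ : X → SgpB) : ∀ (u : List X) (a : X),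
    ¬ (a :: u).Chain' (· ≠ ·) → evalWord φ a u = SgpB.zero := by
  intro u
  induction u with
  | nil => intro a h; simp [List.Chain'] at h
  | cons y l ih =>
    intro a h
    have he : evalWord φ a (y :: l) = φ a * evalWord φ y l := rfl
    by_cases hay : a = y
    · subst hay
      cases l with
      | nil => rw [he]; exact mul_self' (φ a)
      | cons z l' =>
        rw [he]
        show φ a * (φ a * evalWord φ z l') = SgpB.zero
        rw [← mul_assoc, mul_self', zero_mul']
    · have hc : ¬ (y :: l).Chain' (· ≠ ·) := fun hc => h (List.isChain_cons_cons.mpr ⟨hay, hc⟩)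
      rw [he, ih y hc, mul_zero']

lemma evalWord_eq_zero_of_not_trivial (φ : X → SgpB) (a : X) (u : List X)
    (h : ¬ Trivial42 (a :: u)) : evalWord φ a u = SgpB.zero := by
  by_cases hl : (a :: u).length ≤ 3
  · exact evalWord_eq_zero_of_not_chain φ u a (fun hc => h ⟨hl, hc⟩)
  · exact evalWord_eq_zero_of_long φ a u (by simp only [List.length_cons] at hl; omega)

lemma exists_evalWord_ne_zero (a : X) (u : List X) (h : Trivial42 (a :: u)) :
    ∃ φ : X → SgpB, evalWord φ a u ≠ SgpB.zero := by
  classical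
  obtain ⟨hl, hc⟩ := h
  rcases u with _ | ⟨c, _ | ⟨d, _ | ⟨e, u'⟩⟩⟩
  · exact ⟨fun _ => SgpB.x, by simp [evalWord]⟩
  · have hac : a ≠ c := by simpa [List.Chain'] using hc
    refine ⟨fun t => if t = a then SgpB.x else SgpB.y, ?_⟩
    show (if a = a then SgpB.x else SgpB.y) * (if c = a then SgpB.x else SgpB.y) ≠ SgpB.zero
    rw [if_pos rfl, if_neg (Ne.symm hac)]
    decide
  · have h1 : a ≠ c ∧ c ≠ d := by simpa [List.Chain'] using hc
    refine ⟨fun t => if t = c then SgpB.y else SgpB.x, ?_⟩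
    show (if a = c then SgpB.y else SgpB.x) *
        ((if c = c then SgpB.y else SgpB.x) * (if d = c then SgpB.y else SgpB.x)) ≠ SgpB.zero
    rw [if_neg h1.1, if_pos rfl, if_neg (Ne.symm h1.2)]
    decide
  · exfalso; simp only [List.length_cons] at hl; omega

lemma abc_cba : ∀ A B C : SgpB, A * (B * C) = C * (B * A) := by
  intro A B C; cases A <;> cases B <;> cases C <;> rfl

lemma aba_bab : ∀ A B : SgpB, A * (B * A) = B * (A * B) := by
  intro A B; cases A <;> cases B <;> rfl

/- Tag functions and decidable key lemmas for decoding. -/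

def gg2 : Fin 2 → SgpB := ![SgpB.x, SgpB.zero]
def gg3 : Fin 3 → SgpB := ![SgpB.x, SgpB.y, SgpB.zero]
def gA : Fin 4 → SgpB := ![SgpB.x, SgpB.y, SgpB.x, SgpB.zero]
def gB : Fin 4 → SgpB := ![SgpB.x, SgpB.y, SgpB.zero, SgpB.zero]
def gC : Fin 4 → SgpB := ![SgpB.zero, SgpB.y, SgpB.x, SgpB.zero]

variable [DecidableEq X]

def tag2 (a t : X) : Fin 2 := if t = a then 0 else 1
def tag3 (a q t : X) : Fin 3 := if t = a then 0 else if t = q then 1 else 2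
def tag4 (a q r t : X) : Fin 4 :=
  if t = a then 0 else if t = q then 1 else if t = r then 2 else 3

lemma tag2_self (a : X) : tag2 a a = 0 := if_pos rfl
lemma tag2_eq0 {a t : X} (h : tag2 a t = 0) : t = a := by
  by_cases h1 : t = a
  · exact h1
  · rw [tag2, if_neg h1] at h; exact absurd h (by decide)

lemma tag3_fst (a q : X) : tag3 a q a = 0 := if_pos rfl
lemma tag3_snd (a q : X) (h : ¬ q = a) : tag3 a q q = 1 := by
  rw [tag3, if_neg h, if_pos rfl]
lemma tag3_eq0 {a q t : X} (h : tag3 a q t = 0) : t = a := by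
  by_cases h1 : t = a
  · exact h1
  · by_cases h2 : t = q <;> rw [tag3, if_neg h1] at h <;>
      [rw [if_pos h2] at h; rw [if_neg h2] at h] <;> exact absurd h (by decide)
lemma tag3_eq1 {a q t : X} (h : tag3 a q t = 1) : t = q := by
  by_cases h2 : t = q
  · exact h2
  · by_cases h1 : t = a <;> rw [tag3] at h <;>
      [rw [if_pos h1] at h; rw [if_neg h1, if_neg h2] at h] <;> exact absurd h (by decide)

lemma tag4_fst (a q r : X) : tag4 a q r a = 0 := if_pos rfl
lemma tag4_snd (a q r : X) (h : ¬ q = a) : tag4 a q r q = 1 := by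
  rw [tag4, if_neg h, if_pos rfl]
lemma tag4_thd (a q r : X) (h1 : ¬ r = a) (h2 : ¬ r = q) : tag4 a q r r = 2 := by
  rw [tag4, if_neg h1, if_neg h2, if_pos rfl]
lemma tag4_eq0 {a q r t : X} (h : tag4 a q r t = 0) : t = a := by
  by_cases h1 : t = a
  · exact h1
  · exfalso; rw [tag4, if_neg h1] at h
    by_cases h2 : t = q
    · rw [if_pos h2] at h; exact absurd h (by decide)
    · rw [if_neg h2] at h
      by_cases h3 : t = r
      · rw [if_pos h3] at h; exact absurd h (by decide)
      · rw [if_neg h3] at h; exact absurd h (by decide)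
lemma tag4_eq1 {a q r t : X} (h : tag4 a q r t = 1) : t = q := by
  by_cases h2 : t = q
  · exact h2
  · exfalso; rw [tag4] at h
    by_cases h1 : t = a
    · rw [if_pos h1] at h; exact absurd h (by decide)
    · rw [if_neg h1, if_neg h2] at h
      by_cases h3 : t = r
      · rw [if_pos h3] at h; exact absurd h (by decide)
      · rw [if_neg h3] at h; exact absurd h (by decide)
lemma tag4_eq2 {a q r t : X} (h : tag4 a q r t = 2) : t = r := by
  by_cases h3 : t = r
  · exact h3
  · exfalso; rw [tag4] at h
    by_cases h1 : t = a
    · rw [if_pos h1] at h; exact absurd h (by decide)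
    · rw [if_neg h1] at h
      by_cases h2 : t = q
      · rw [if_pos h2] at h; exact absurd h (by decide)
      · rw [if_neg h2, if_neg h3] at h; exact absurd h (by decide)

lemma key11 : ∀ i : Fin 2, gg2 0 = gg2 i → i = 0 := by decide
lemma key12 : ∀ i j : Fin 2, gg2 0 ≠ gg2 i * gg2 j := by decide
lemma key13 : ∀ i j k : Fin 2, gg2 0 ≠ gg2 i * (gg2 j * gg2 k) := by decide
lemma key21 : ∀ i : Fin 3, gg3 0 * gg3 1 ≠ gg3 i := by decide
lemma key22 : ∀ i j : Fin 3, gg3 0 * gg3 1 = gg3 i * gg3 j → i = 0 ∧ j = 1 := by decide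
lemma key23 : ∀ i j k : Fin 3, gg3 0 * gg3 1 ≠ gg3 i * (gg3 j * gg3 k) := by decide
lemma key31 : ∀ i : Fin 3, gg3 0 * (gg3 1 * gg3 0) ≠ gg3 i := by decide
lemma key32 : ∀ i j : Fin 3, gg3 0 * (gg3 1 * gg3 0) ≠ gg3 i * gg3 j := by decide
lemma key33 : ∀ i j k : Fin 3, gg3 0 * (gg3 1 * gg3 0) = gg3 i * (gg3 j * gg3 k) →
    (i = 0 ∧ j = 1 ∧ k = 0) ∨ (i = 1 ∧ j = 0 ∧ k = 1) := by decide
lemma key41 : ∀ i : Fin 4, gA 0 * (gA 1 * gA 2) ≠ gA i := by decide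
lemma key42 : ∀ i j : Fin 4, gA 0 * (gA 1 * gA 2) ≠ gA i * gA j := by decide
lemma key43 : ∀ i j k : Fin 4,
    gA 0 * (gA 1 * gA 2) = gA i * (gA j * gA k) →
    gB 0 * (gB 1 * gB 2) = gB i * (gB j * gB k) →
    gC 0 * (gC 1 * gC 2) = gC i * (gC j * gC k) →
    (i = 0 ∧ j = 1 ∧ k = 2) ∨ (i = 2 ∧ j = 1 ∧ k = 0) := by decide

end SgpBAux

open SgpBAux in
/-- B satisfies a non-trivial identity `a :: u ≈ b :: v` iff either neither side is
(4,2)-trivial, or the identity has the form abc ≈ cba, or the form aba ≈ bab. -/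
theorem SgpB_satisfies_iff {X : Type*} (a b : X) (u v : List X)
    (hne : a :: u ≠ b :: v) :
    (∀ φ : X → SgpB, evalWord φ a u = evalWord φ b v) ↔
      ((¬ Trivial42 (a :: u) ∧ ¬ Trivial42 (b :: v)) ∨
        (∃ p q r : X, p ≠ q ∧ q ≠ r ∧ p ≠ r ∧
          a :: u = [p, q, r] ∧ b :: v = [r, q, p]) ∨
        (∃ p q : X, p ≠ q ∧ a :: u = [p, q, p] ∧ b :: v = [q, p, q])) := by
  classical
  constructor
  · intro h
    by_cases t1 : Trivial42 (a :: u)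
    · by_cases t2 : Trivial42 (b :: v)
      · refine Or.inr ?_
        obtain ⟨hl1, hc1⟩ := t1
        obtain ⟨hl2, hc2⟩ := t2
        rcases u with _ | ⟨q, _ | ⟨r, _ | ⟨s, u'⟩⟩⟩
        · -- w1 = [a]
          have h1 := h (fun t => gg2 (tag2 a t))
          clear h
          rcases v with _ | ⟨c, _ | ⟨d, _ | ⟨e, v'⟩⟩⟩
          · exfalso
            have e : gg2 (tag2 a a) = gg2 (tag2 a b) := h1
            rw [tag2_self] at e
            exact hne (by rw [tag2_eq0 (key11 _ e)])
          · exfalso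
            have e : gg2 (tag2 a a) = gg2 (tag2 a b) * gg2 (tag2 a c) := h1
            rw [tag2_self] at e
            exact key12 _ _ e
          · exfalso
            have e : gg2 (tag2 a a) = gg2 (tag2 a b) * (gg2 (tag2 a c) * gg2 (tag2 a d)) := h1
            rw [tag2_self] at e
            exact key13 _ _ _ e
          · exfalso; simp only [List.length_cons] at hl2; omega
        · -- w1 = [a, q]
          have haq : a ≠ q := by simpa [List.Chain'] using hc1
          have hqa : ¬ (q = a) := fun h' => haq h'.symm
          have h1 := h (fun t => gg3 (tag3 a q t))
          clear h
          rcases v with _ | ⟨c, _ | ⟨d, _ | ⟨e, v'⟩⟩⟩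
          · exfalso
            have e : gg3 (tag3 a q a) * gg3 (tag3 a q q) = gg3 (tag3 a q b) := h1
            rw [tag3_fst, tag3_snd a q hqa] at e
            exact key21 _ e
          · exfalso
            have e : gg3 (tag3 a q a) * gg3 (tag3 a q q)
                = gg3 (tag3 a q b) * gg3 (tag3 a q c) := h1
            rw [tag3_fst, tag3_snd a q hqa] at e
            obtain ⟨e1, e2⟩ := key22 _ _ e
            exact hne (by rw [tag3_eq0 e1, tag3_eq1 e2])
          · exfalso
            have e : gg3 (tag3 a q a) * gg3 (tag3 a q q)
                = gg3 (tag3 a q b) * (gg3 (tag3 a q c) * gg3 (tag3 a q d)) := h1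
            rw [tag3_fst, tag3_snd a q hqa] at e
            exact key23 _ _ _ e
          · exfalso; simp only [List.length_cons] at hl2; omega
        · -- w1 = [a, q, r]
          have hcc : a ≠ q ∧ q ≠ r := by simpa [List.Chain'] using hc1
          obtain ⟨haq, hqr⟩ := hcc
          have hqa : ¬ (q = a) := fun h' => haq h'.symm
          have hrq : ¬ (r = q) := fun h' => hqr h'.symm
          by_cases har : a = r
          · -- w1 = [a, q, a]
            subst har
            have h1 := h (fun t => gg3 (tag3 a q t))
            clear h
            rcases v with _ | ⟨c, _ | ⟨d, _ | ⟨e, v'⟩⟩⟩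
            · exfalso
              have e : gg3 (tag3 a q a) * (gg3 (tag3 a q q) * gg3 (tag3 a q a))
                  = gg3 (tag3 a q b) := h1
              rw [tag3_fst, tag3_snd a q hqa] at e
              exact key31 _ e
            · exfalso
              have e : gg3 (tag3 a q a) * (gg3 (tag3 a q q) * gg3 (tag3 a q a))
                  = gg3 (tag3 a q b) * gg3 (tag3 a q c) := h1
              rw [tag3_fst, tag3_snd a q hqa] at e
              exact key32 _ _ e
            · have e : gg3 (tag3 a q a) * (gg3 (tag3 a q q) * gg3 (tag3 a q a))
                  = gg3 (tag3 a q b) * (gg3 (tag3 a q c) * gg3 (tag3 a q d)) := h1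
              rw [tag3_fst, tag3_snd a q hqa] at e
              rcases key33 _ _ _ e with ⟨e1, e2, e3⟩ | ⟨e1, e2, e3⟩
              · exact absurd (show a :: [q, a] = b :: [c, d] by
                  rw [tag3_eq0 e1, tag3_eq1 e2, tag3_eq0 e3]) hne
              · exact Or.inr ⟨a, q, haq, rfl, by
                  rw [tag3_eq1 e1, tag3_eq0 e2, tag3_eq1 e3]⟩
            · exfalso; simp only [List.length_cons] at hl2; omega
          · -- w1 = [a, q, r] with a, q, r pairwise distinct
            have hra : ¬ (r = a) := fun h' => har h'.symm
            have h1 := h (fun t => gA (tag4 a q r t))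
            have h2 := h (fun t => gB (tag4 a q r t))
            have h3 := h (fun t => gC (tag4 a q r t))
            clear h
            rcases v with _ | ⟨c, _ | ⟨d, _ | ⟨e, v'⟩⟩⟩
            · exfalso
              have e : gA (tag4 a q r a) * (gA (tag4 a q r q) * gA (tag4 a q r r))
                  = gA (tag4 a q r b) := h1
              rw [tag4_fst, tag4_snd a q r hqa, tag4_thd a q r hra hrq] at e
              exact key41 _ e
            · exfalso
              have e : gA (tag4 a q r a) * (gA (tag4 a q r q) * gA (tag4 a q r r))
                  = gA (tag4 a q r b) * gA (tag4 a q r c) := h1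
              rw [tag4_fst, tag4_snd a q r hqa, tag4_thd a q r hra hrq] at e
              exact key42 _ _ e
            · have e1 : gA (tag4 a q r a) * (gA (tag4 a q r q) * gA (tag4 a q r r))
                  = gA (tag4 a q r b) * (gA (tag4 a q r c) * gA (tag4 a q r d)) := h1
              have e2 : gB (tag4 a q r a) * (gB (tag4 a q r q) * gB (tag4 a q r r))
                  = gB (tag4 a q r b) * (gB (tag4 a q r c) * gB (tag4 a q r d)) := h2
              have e3 : gC (tag4 a q r a) * (gC (tag4 a q r q) * gC (tag4 a q r r))
                  = gC (tag4 a q r b) * (gC (tag4 a q r c) * gC (tag4 a q r d)) := h3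
              rw [tag4_fst, tag4_snd a q r hqa, tag4_thd a q r hra hrq] at e1 e2 e3
              rcases key43 _ _ _ e1 e2 e3 with ⟨f1, f2, f3⟩ | ⟨f1, f2, f3⟩
              · exact absurd (show a :: [q, r] = b :: [c, d] by
                  rw [tag4_eq0 f1, tag4_eq1 f2, tag4_eq2 f3]) hne
              · exact Or.inl ⟨a, q, r, haq, hqr, har, rfl, by
                  rw [tag4_eq2 f1, tag4_eq1 f2, tag4_eq0 f3]⟩
            · exfalso; simp only [List.length_cons] at hl2; omega
        · exfalso; simp only [List.length_cons] at hl1; omega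
      · exfalso
        obtain ⟨φ, hφ⟩ := exists_evalWord_ne_zero a u t1
        exact hφ ((h φ).trans (evalWord_eq_zero_of_not_trivial φ b v t2))
    · by_cases t2 : Trivial42 (b :: v)
      · exfalso
        obtain ⟨φ, hφ⟩ := exists_evalWord_ne_zero b v t2
        exact hφ ((h φ).symm.trans (evalWord_eq_zero_of_not_trivial φ a u t1))
      · exact Or.inl ⟨t1, t2⟩
  · rintro (⟨t1, t2⟩ | ⟨p, q', r', hpq, hqr, hpr, h1, h2⟩ | ⟨p, q', hpq, h1, h2⟩) φ
    · rw [evalWord_eq_zero_of_not_trivial φ a u t1, evalWord_eq_zero_of_not_trivial φ b v t2]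
    · simp only [List.cons.injEq] at h1 h2
      obtain ⟨rfl, rfl⟩ := h1
      obtain ⟨rfl, rfl⟩ := h2
      exact abc_cba (φ _) (φ _) (φ _)
    · simp only [List.cons.injEq] at h1 h2
      obtain ⟨rfl, rfl⟩ := h1
      obtain ⟨rfl, rfl⟩ := h2
      exact aba_bab (φ _) (φ _)
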